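/- For k \geq 1, the probability that A wins a Best-of-(2k+1) game under the Standard Rule (equivalently the Catch-Up Rule, or the Auxiliary Rule in which A serves k+1 times then B serves k times) equals \sum_{n=1}^{k+1} \sum_{m=0}^{n-1} \binom{k+1}{n} \binom{k}{m} p^n (1-p)^{k+1-n} q^m (1-q)^{k-m}. -/
import Mathlib


/-- Win probability for player `A` in a service game played to `goal` points.
`next prevSrv aWon` gives the next server (`true` = A serves). `srv = true` means
A serves the current point; A wins on his serve with probability `p`, B wins on her
serve with probability `q`. `fuel` bounds the number of points played. -/
def winProb (p q : ℝ) (goal : ℕ) (next : Bool → Bool → Bool) :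
    ℕ → ℕ → ℕ → Bool → ℝ
  | 0, _, _, _ => 0
  | fuel + 1, x, y, srv =>
    if goal ≤ x then 1
    else if goal ≤ y then 0
    else
      (if srv then p else 1 - q) * winProb p q goal next fuel (x + 1) y (next srv true) +
        (1 - if srv then p else 1 - q) * winProb p q goal next fuel x (y + 1) (next srv false)

/-- Standard Rule: the winner of the point serves next. -/
def nextSR : Bool → Bool → Bool := fun _ aWon => aWon

/-- Catch-Up Rule: the loser of the point serves next. -/
def nextCR : Bool → Bool → Bool := fun _ aWon => !aWon

/-- Auxiliary Rule: all `2k+1` points are played, A serving the first `k+1` of them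
and B the remaining `k`.  `t` is the number of points already played and `x` is A's
current score; returns the probability that A ends with at least `k+1` points. -/
def winProbAR (p q : ℝ) (k : ℕ) : ℕ → ℕ → ℕ → ℝ
  | 0, _, x => if k + 1 ≤ x then 1 else 0
  | fuel + 1, t, x =>
      (if t < k + 1 then p else 1 - q) * winProbAR p q k fuel (t + 1) (x + 1) +
        (1 - if t < k + 1 then p else 1 - q) * winProbAR p q k fuel (t + 1) x

open Finset

/-- `D p q a b c` = probability that `Bin(a,p) + Bin(b,1-q) ≥ c`. -/
def D (p q : ℝ) : ℕ → ℕ → ℕ → ℝ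
  | 0, 0, c => if c = 0 then 1 else 0
  | 0, b+1, c => (1-q) * D p q 0 b (c-1) + q * D p q 0 b c
  | a+1, b, c => p * D p q a b (c-1) + (1-p) * D p q a b c

lemma D_succ_left (p q : ℝ) (a b c : ℕ) :
    D p q (a+1) b c = p * D p q a b (c-1) + (1-p) * D p q a b c := by
  rw [D]

lemma D_base_right (p q : ℝ) (b c : ℕ) :
    D p q 0 (b+1) c = (1-q) * D p q 0 b (c-1) + q * D p q 0 b c := by
  rw [D]

lemma D_succ_right (p q : ℝ) (b : ℕ) :
    ∀ a c, D p q a (b+1) c = (1-q) * D p q a b (c-1) + q * D p q a b c := by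
  intro a
  induction a with
  | zero => intro c; rw [D_base_right]
  | succ a ih =>
    intro c
    rw [D_succ_left, ih, ih, D_succ_left, D_succ_left]
    ring

lemma D_zero (p q : ℝ) : ∀ a b, D p q a b 0 = 1 := by
  intro a
  induction a with
  | zero =>
    intro b
    induction b with
    | zero => simp [D]
    | succ b ih => rw [D_base_right, ih]; ring
  | succ a ih =>
    intro b
    rw [D_succ_left, ih]; ring

lemma D_of_lt (p q : ℝ) : ∀ a b c, a + b < c → D p q a b c = 0 := by
  intro a
  induction a with
  | zero =>
    intro b
    induction b with
    | zero => intro c hc; rw [D]; simp; omega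
    | succ b ih =>
      intro c hc
      rw [D_base_right, ih (c-1) (by omega), ih c (by omega)]
      ring
  | succ a ih =>
    intro b c hc
    rw [D_succ_left, ih b (c-1) (by omega), ih b c (by omega)]; ring

lemma split_sum (x y : ℝ) (a : ℕ) (g : ℕ → ℝ) :
    ∑ n ∈ range (a+2), ((a+1).choose n : ℝ) * x^n * y^(a+1-n) * g n
      = x * ∑ n ∈ range (a+1), (a.choose n : ℝ) * x^n * y^(a-n) * g (n+1)
        + y * ∑ n ∈ range (a+1), (a.choose n : ℝ) * x^n * y^(a-n) * g n := by
  rw [Finset.sum_range_succ' (fun n => ((a+1).choose n : ℝ) * x^n * y^(a+1-n) * g n) (a+1)]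
  have h1 : ∀ n ∈ range (a+1),
      ((a+1).choose (n+1) : ℝ) * x^(n+1) * y^(a+1-(n+1)) * g (n+1)
        = (a.choose n : ℝ) * x^(n+1) * y^(a-n) * g (n+1)
          + (a.choose (n+1) : ℝ) * x^(n+1) * y^(a-n) * g (n+1) := by
    intro n hn
    rw [Nat.choose_succ_succ]
    have h : a + 1 - (n+1) = a - n := by omega
    rw [h]
    push_cast
    ring
  rw [Finset.sum_congr rfl h1, Finset.sum_add_distrib]
  have h2 : ∑ n ∈ range (a+1), (a.choose n : ℝ) * x^(n+1) * y^(a-n) * g (n+1)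
      = x * ∑ n ∈ range (a+1), (a.choose n : ℝ) * x^n * y^(a-n) * g (n+1) := by
    rw [Finset.mul_sum]
    exact Finset.sum_congr rfl fun n hn => by ring
  have h3 : ∑ n ∈ range (a+1), (a.choose (n+1) : ℝ) * x^(n+1) * y^(a-n) * g (n+1)
        + ((a+1).choose 0 : ℝ) * x^0 * y^(a+1-0) * g 0
      = y * ∑ n ∈ range (a+1), (a.choose n : ℝ) * x^n * y^(a-n) * g n := by
    rw [Finset.mul_sum,
      Finset.sum_range_succ' (fun n => y * ((a.choose n : ℝ) * x^n * y^(a-n) * g n)) a,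
      Finset.sum_range_succ (fun n => (a.choose (n+1) : ℝ) * x^(n+1) * y^(a-n) * g (n+1)) a,
      Nat.choose_succ_self]
    simp only [Nat.cast_zero, zero_mul, add_zero, Nat.choose_zero_right, Nat.cast_one, one_mul,
      pow_zero, Nat.sub_zero]
    congr 1
    · refine Finset.sum_congr rfl fun n hn => ?_
      have hn' : n < a := Finset.mem_range.mp hn
      have h : a - n = (a - (n+1)) + 1 := by omega
      rw [h]
      ring
    · rw [pow_succ]
      ring
  linarith [h2, h3]

/-- closed form for `D`. -/
def S (p q : ℝ) (a b c : ℕ) : ℝ :=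
  ∑ n ∈ range (a+1), (a.choose n : ℝ) * p^n * (1-p)^(a-n) *
    ∑ j ∈ range (b+1), (b.choose j : ℝ) * (1-q)^j * q^(b-j) *
      (if c ≤ n + j then (1:ℝ) else 0)

lemma S_succ_left (p q : ℝ) (a b c : ℕ) :
    S p q (a+1) b c = p * S p q a b (c-1) + (1-p) * S p q a b c := by
  unfold S
  rw [show a+1+1 = a+2 from rfl,
    split_sum p (1-p) a
      (fun n => ∑ j ∈ range (b+1), (b.choose j : ℝ) * (1-q)^j * q^(b-j) *
        (if c ≤ n + j then (1:ℝ) else 0))]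
  congr 2
  refine Finset.sum_congr rfl fun n _ => ?_
  congr 1
  refine Finset.sum_congr rfl fun j _ => ?_
  congr 1
  have h : (c ≤ n + 1 + j) ↔ (c - 1 ≤ n + j) := by omega
  simp [h]

lemma S_succ_right (p q : ℝ) (a b c : ℕ) :
    S p q a (b+1) c = (1-q) * S p q a b (c-1) + q * S p q a b c := by
  unfold S
  rw [Finset.mul_sum, Finset.mul_sum, ← Finset.sum_add_distrib]
  refine Finset.sum_congr rfl fun n _ => ?_
  rw [show b+1+1 = b+2 from rfl,
    split_sum (1-q) q b (fun j => if c ≤ n + j then (1:ℝ) else 0)]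
  have h : ∀ j : ℕ, (if c ≤ n + (j+1) then (1:ℝ) else 0)
      = (if c - 1 ≤ n + j then (1:ℝ) else 0) := by
    intro j
    have h : (c ≤ n + (j+1)) ↔ (c - 1 ≤ n + j) := by omega
    simp [h]
  simp only [h]
  ring

lemma S_base (p q : ℝ) (c : ℕ) : S p q 0 0 c = if c = 0 then 1 else 0 := by
  unfold S
  simp [Nat.le_zero]

lemma D_eq_S (p q : ℝ) : ∀ a b c, D p q a b c = S p q a b c := by
  intro a
  induction a with
  | zero =>
    intro b
    induction b with
    | zero => intro c; rw [S_base, D]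
    | succ b ihb => intro c; rw [D_base_right, ihb, ihb, S_succ_right]
  | succ a iha =>
    intro b c
    rw [D_succ_left, iha, iha, S_succ_left]

/-- Kingston-type invariant for the Standard Rule. -/
lemma SR_inv (p q : ℝ) (g : ℕ) :
    ∀ fuel x y (srv : Bool), x ≤ g → y ≤ g → 2*g ≤ x+y+fuel → x+y+1 ≤ 2*g →
      (srv = true → y < g) →
      winProb p q g nextSR fuel x y srv =
        D p q (g - x - cond srv 0 1) (g - y - cond srv 1 0) (g - x) := by
  intro fuel
  induction fuel with
  | zero => intro x y srv h1 h2 h3 h4 h5; omega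
  | succ fuel ih =>
    intro x y srv hx hy hf hs hsrv
    rw [winProb]
    by_cases hxg : g ≤ x
    · rw [if_pos hxg, show g - x = 0 by omega, D_zero]
    · rw [if_neg hxg]
      by_cases hyg : g ≤ y
      · rw [if_pos hyg]
        have hsf : srv = false := by
          cases srv
          · rfl
          · exact absurd (hsrv rfl) (by omega)
        subst hsf
        rw [show g - y - cond false 1 0 = 0 by simp; omega]
        exact (D_of_lt p q _ 0 _ (by simp; omega)).symm
      · rw [if_neg hyg]
        have hx' : x < g := lt_of_not_ge hxg
        have hy' : y < g := lt_of_not_ge hyg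
        cases srv with
        | true =>
          have c1 := ih (x+1) y true (by omega) hy (by omega) (by omega) (fun _ => hy')
          have c2 := ih x (y+1) false hx (by omega) (by omega) (by omega) (by simp)
          rw [show nextSR true true = true from rfl, show nextSR true false = false from rfl]
          rw [if_pos rfl, c1, c2]
          simp only [Bool.cond_true, Bool.cond_false]
          have key : D p q (g-x-0) (g-y-1) (g-x)
              = p * D p q (g-x-1) (g-y-1) (g-x-1) + (1-p) * D p q (g-x-1) (g-y-1) (g-x) := by
            obtain ⟨A, hA⟩ : ∃ A, g - x = A + 1 := ⟨g-x-1, by omega⟩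
            rw [show g-x-0 = g-x by omega, show g-x-1 = A by omega, hA, D_succ_left,
              Nat.add_sub_cancel]
          rw [key, show g-(x+1)-0 = g-x-1 by omega, show g-(x+1) = g-x-1 by omega,
            show g-(y+1)-0 = g-y-1 by omega]
        | false =>
          have c1 := ih (x+1) y true (by omega) hy (by omega) (by omega) (fun _ => hy')
          have c2 := ih x (y+1) false hx (by omega) (by omega) (by omega) (by simp)
          rw [show nextSR false true = true from rfl, show nextSR false false = false from rfl]
          rw [if_neg (by simp), c1, c2]
          simp only [Bool.cond_true, Bool.cond_false]
          have key : D p q (g-x-1) (g-y-0) (g-x)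
              = (1-q) * D p q (g-x-1) (g-y-1) (g-x-1) + q * D p q (g-x-1) (g-y-1) (g-x) := by
            obtain ⟨B, hB⟩ : ∃ B, g - y = B + 1 := ⟨g-y-1, by omega⟩
            rw [show g-y-0 = g-y by omega, show g-y-1 = B by omega, hB, D_succ_right]
          rw [key, show g-(x+1)-0 = g-x-1 by omega, show g-(x+1) = g-x-1 by omega,
            show g-(y+1)-0 = g-y-1 by omega]
          ring

/-- Kingston-type invariant for the Catch-Up Rule. -/
lemma CR_inv (p q : ℝ) (k : ℕ) :
    ∀ fuel x y (srv : Bool), x ≤ k+1 → y ≤ k+1 → 2*(k+1) ≤ x+y+fuel → x+y+1 ≤ 2*(k+1) →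
      (srv = false → y < k+1) →
      winProb p q (k+1) nextCR fuel x y srv =
        D p q ((cond srv (k+1) k) - y) ((cond srv k (k+1)) - x) ((k+1) - x) := by
  intro fuel
  induction fuel with
  | zero => intro x y srv h1 h2 h3 h4 h5; omega
  | succ fuel ih =>
    intro x y srv hx hy hf hs hsrv
    rw [winProb]
    by_cases hxg : k+1 ≤ x
    · rw [if_pos hxg, show k+1 - x = 0 by omega, D_zero]
    · rw [if_neg hxg]
      have hx' : x < k+1 := lt_of_not_ge hxg
      by_cases hyg : k+1 ≤ y
      · rw [if_pos hyg]
        have hst : srv = true := by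
          cases srv
          · exact absurd (hsrv rfl) (by omega)
          · rfl
        subst hst
        rw [show (cond true (k+1) k) - y = 0 by simp; omega]
        exact (D_of_lt p q 0 _ _ (by simp [Bool.cond_true]; omega)).symm
      · rw [if_neg hyg]
        have hy' : y < k+1 := lt_of_not_ge hyg
        cases srv with
        | true =>
          have c1 := ih (x+1) y false (by omega) hy (by omega) (by omega) (fun _ => hy')
          have c2 := ih x (y+1) true hx (by omega) (by omega) (by omega) (by simp)
          rw [show nextCR true true = false from rfl, show nextCR true false = true from rfl]
          rw [if_pos rfl, c1, c2]
          simp only [Bool.cond_true, Bool.cond_false]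
          have key : D p q (k+1-y) (k-x) (k+1-x)
              = p * D p q (k-y) (k-x) (k-x) + (1-p) * D p q (k-y) (k-x) (k+1-x) := by
            obtain ⟨A, hA⟩ : ∃ A, k+1 - y = A + 1 := ⟨k-y, by omega⟩
            rw [hA, D_succ_left, show k+1-x-1 = k-x by omega, show A = k-y by omega]
          rw [key, show k+1-(x+1) = k-x by omega, show k+1-(y+1) = k-y by omega]
        | false =>
          have hy'' : y < k+1 := hsrv rfl
          have c1 := ih (x+1) y false (by omega) hy (by omega) (by omega) (fun _ => hy')
          have c2 := ih x (y+1) true hx (by omega) (by omega) (by omega) (by simp)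
          rw [show nextCR false true = false from rfl, show nextCR false false = true from rfl]
          rw [if_neg (by simp), c1, c2]
          simp only [Bool.cond_true, Bool.cond_false]
          have key : D p q (k-y) (k+1-x) (k+1-x)
              = (1-q) * D p q (k-y) (k-x) (k-x) + q * D p q (k-y) (k-x) (k+1-x) := by
            obtain ⟨B, hB⟩ : ∃ B, k+1 - x = B + 1 := ⟨k-x, by omega⟩
            rw [hB, D_succ_right, Nat.add_sub_cancel, show B = k-x by omega]
          rw [key, show k+1-(x+1) = k-x by omega, show k+1-(y+1) = k-y by omega]
          ring

/-- invariant for the Auxiliary Rule. -/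
lemma AR_inv (p q : ℝ) (k : ℕ) :
    ∀ fuel t x, t + fuel = 2*k+1 →
      winProbAR p q k fuel t x = D p q ((k+1) - t) (fuel - ((k+1) - t)) ((k+1) - x) := by
  intro fuel
  induction fuel with
  | zero =>
    intro t x ht
    rw [winProbAR, show (k+1) - t = 0 by omega]
    rw [show (0:ℕ) - 0 = 0 by rfl, D]
    by_cases h : k+1 ≤ x
    · rw [if_pos h, if_pos (by omega)]
    · rw [if_neg h, if_neg (by omega)]
  | succ fuel ih =>
    intro t x ht
    rw [winProbAR]
    by_cases h : t < k+1
    · rw [if_pos h, ih (t+1) (x+1) (by omega), ih (t+1) x (by omega)]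
      have key : D p q (k+1-t) (fuel+1-(k+1-t)) (k+1-x)
          = p * D p q (k-t) (fuel-(k-t)) (k+1-x-1) + (1-p) * D p q (k-t) (fuel-(k-t)) (k+1-x) := by
        rw [show k+1-t = (k-t)+1 by omega, D_succ_left, show fuel+1-((k-t)+1) = fuel-(k-t) by omega]
      rw [key, show k+1-(t+1) = k-t by omega, show k+1-(x+1) = k+1-x-1 by omega]
    · rw [if_neg h, ih (t+1) (x+1) (by omega), ih (t+1) x (by omega)]
      rw [show k+1-t = 0 by omega, show k+1-(t+1) = 0 by omega]
      rw [show fuel+1-(0:ℕ) = fuel+1 by omega, show fuel-(0:ℕ) = fuel by omega]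
      rw [D_succ_right, show k+1-(x+1) = k+1-x-1 by omega]
      ring

lemma S_final (p q : ℝ) (k : ℕ) :
    S p q (k+1) k (k+1) = ∑ n ∈ Finset.Icc 1 (k+1), ∑ m ∈ Finset.range n,
      ((k+1).choose n : ℝ) * (k.choose m : ℝ) *
        p ^ n * (1 - p) ^ (k + 1 - n) * q ^ m * (1 - q) ^ (k - m) := by
  have hinner : ∀ n, n ≤ k+1 →
      (∑ j ∈ range (k+1), (k.choose j : ℝ) * (1-q)^j * q^(k-j) *
          (if k+1 ≤ n + j then (1:ℝ) else 0))
        = ∑ m ∈ range n, (k.choose m : ℝ) * q^m * (1-q)^(k-m) := by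
    intro n hn
    rw [← Finset.sum_range_reflect]
    have e1 : ∀ m ∈ range (k+1),
        (k.choose (k+1-1-m) : ℝ) * (1-q)^(k+1-1-m) * q^(k-(k+1-1-m)) *
          (if k+1 ≤ n + (k+1-1-m) then (1:ℝ) else 0)
        = (k.choose m : ℝ) * q^m * (1-q)^(k-m) * (if m < n then (1:ℝ) else 0) := by
      intro m hm
      have hm' : m ≤ k := by
        have := Finset.mem_range.mp hm
        omega
      have hiff : (k+1 ≤ n + (k+1-1-m)) ↔ (m < n) := by omega
      rw [if_congr hiff rfl rfl, show k+1-1-m = k-m by omega, Nat.choose_symm hm',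
        show k-(k-m) = m by omega]
      ring
    rw [Finset.sum_congr rfl e1]
    have h0 : ∀ x ∈ range (k+1), x ∉ range n →
        (k.choose x : ℝ) * q^x * (1-q)^(k-x) * (if x < n then (1:ℝ) else 0) = 0 := by
      intro x _ hx
      rw [if_neg (by simpa using hx), mul_zero]
    rw [← Finset.sum_subset (Finset.range_subset_range.mpr hn) h0]
    exact Finset.sum_congr rfl fun m hm => by
      rw [if_pos (Finset.mem_range.mp hm), mul_one]
  unfold S
  rw [Finset.sum_congr rfl (fun n hn => by
    rw [hinner n (by have := Finset.mem_range.mp hn; omega)])]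
  rw [show range (k+1+1) = insert 0 (Finset.Icc 1 (k+1)) by ext m; simp; omega,
    Finset.sum_insert (by simp)]
  simp only [Finset.range_zero, Finset.sum_empty, mul_zero, zero_add]
  refine Finset.sum_congr rfl fun n hn => ?_
  rw [Finset.mul_sum]
  exact Finset.sum_congr rfl fun m hm => by ring

/-- For `k ≥ 1`, the probability that A wins a Best-of-(2k+1) game under the Standard
Rule (equivalently the Catch-Up Rule, or the Auxiliary Rule in which A serves `k+1`
times then B serves `k` times) equals
`∑_{n=1}^{k+1} ∑_{m=0}^{n-1} C(k+1,n) C(k,m) pⁿ(1-p)^{k+1-n} qᵐ(1-q)^{k-m}`. -/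
theorem winProb_formula (k : ℕ) (hk : 1 ≤ k) (p q : ℝ)
    (hp0 : 0 < p) (hp1 : p < 1) (hq0 : 0 < q) (hq1 : q < 1) :
    winProb p q (k + 1) nextSR (2 * k + 2) 0 0 true
        = ∑ n ∈ Finset.Icc 1 (k + 1), ∑ m ∈ Finset.range n,
            ((k + 1).choose n : ℝ) * (k.choose m : ℝ) *
              p ^ n * (1 - p) ^ (k + 1 - n) * q ^ m * (1 - q) ^ (k - m) ∧
      winProb p q (k + 1) nextCR (2 * k + 2) 0 0 true
        = winProb p q (k + 1) nextSR (2 * k + 2) 0 0 true ∧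
      winProbAR p q k (2 * k + 1) 0 0
        = winProb p q (k + 1) nextSR (2 * k + 2) 0 0 true := by
  have hSR := SR_inv p q (k+1) (2*k+2) 0 0 true (by omega) (by omega) (by omega) (by omega)
    (fun _ => by omega)
  simp only [Bool.cond_true, Nat.sub_zero, Nat.add_sub_cancel] at hSR
  have hCR := CR_inv p q k (2*k+2) 0 0 true (by omega) (by omega) (by omega) (by omega)
    (by simp)
  simp only [Bool.cond_true, Nat.sub_zero] at hCR
  have hAR := AR_inv p q k (2*k+1) 0 0 (by omega)
  rw [show (k+1) - 0 = k+1 by omega, show 2*k+1-(k+1) = k by omega] at hAR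
  refine ⟨?_, by rw [hCR, hSR], by rw [hAR, hSR]⟩
  rw [hSR, D_eq_S, S_final]
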